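/- arXiv:1609.07363 — 2 statements merged into one kernel-verified Lean document; each statement's English description precedes it below -/
import Mathlib

section
/- Let Z be a real random variable having a density f with respect to Lebesgue measure which is nondecreasing on (−∞, 0] and nonincreasing on [0, ∞) (a unimodal density with mode at 0). Then for every K > 0, E[Z² · 1_{|Z| ≤ K}] ≤ (K²/3) · P(|Z| ≤ K); equivalently, σ² = E[Z² | |Z| ≤ K] ≤ K²/3 whenever P(|Z| ≤ K) > 0. -/
open MeasureTheory
open scoped NNReal ENNReal

lemma aux_half (K : ℝ) (hK : 0 < K) (g : ℝ → ℝ)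
    (hm : Measurable g) (h0 : ∀ x, 0 ≤ g x)
    (ha : AntitoneOn g (Set.Icc 0 K))
    (hi : IntegrableOn g (Set.Ioc 0 K)) :
    ∫ x in (0:ℝ)..K, x ^ 2 * g x ≤ K ^ 2 / 3 * ∫ x in (0:ℝ)..K, g x := by
  set c := K / Real.sqrt 3 with hc
  have hs3 : (1:ℝ) ≤ Real.sqrt 3 := by
    rw [show (1:ℝ) = Real.sqrt 1 from (Real.sqrt_one).symm]
    exact Real.sqrt_le_sqrt (by norm_num)
  have hc0 : 0 < c := div_pos hK (lt_of_lt_of_le one_pos hs3)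
  have hcK : c ≤ K := by rw [hc]; exact div_le_self hK.le hs3
  have hc2 : c ^ 2 = K ^ 2 / 3 := by
    rw [hc, div_pow, Real.sq_sqrt (by norm_num : (0:ℝ) ≤ 3)]
  have hcmem : c ∈ Set.Icc (0:ℝ) K := ⟨hc0.le, hcK⟩
  -- integrability
  have hIg : IntervalIntegrable g volume 0 K := by
    rw [intervalIntegrable_iff, Set.uIoc_of_le hK.le]; exact hi
  have hIx2g : IntervalIntegrable (fun x => x ^ 2 * g x) volume 0 K := by
    rw [intervalIntegrable_iff, Set.uIoc_of_le hK.le]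
    refine Integrable.mono' (hi.const_mul (K ^ 2))
      ((measurable_id.pow_const 2).mul hm).aestronglyMeasurable ?_
    rw [ae_restrict_iff' measurableSet_Ioc]
    filter_upwards with x hx
    have hx2 : x ^ 2 ≤ K ^ 2 := by nlinarith [hx.1, hx.2]
    have : ‖x ^ 2 * g x‖ = x ^ 2 * g x := by
      rw [Real.norm_eq_abs, abs_of_nonneg (mul_nonneg (sq_nonneg x) (h0 x))]
    rw [this]
    exact mul_le_mul_of_nonneg_right hx2 (h0 x)
  have hIh : IntervalIntegrable (fun x => (x ^ 2 - K ^ 2 / 3) * g x) volume 0 K := by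
    have : (fun x => (x ^ 2 - K ^ 2 / 3) * g x)
        = fun x => x ^ 2 * g x - K ^ 2 / 3 * g x := by ext x; ring
    rw [this]
    exact hIx2g.sub (hIg.const_mul _)
  have hIc : IntervalIntegrable (fun x => (x ^ 2 - K ^ 2 / 3) * g c) volume 0 K :=
    (Continuous.mul (by continuity) continuous_const).intervalIntegrable _ _
  have hIdiff : IntervalIntegrable (fun x => (x ^ 2 - K ^ 2 / 3) * (g x - g c)) volume 0 K := by
    have : (fun x => (x ^ 2 - K ^ 2 / 3) * (g x - g c))
        = fun x => (x ^ 2 - K ^ 2 / 3) * g x - (x ^ 2 - K ^ 2 / 3) * g c := by ext x; ring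
    rw [this]; exact hIh.sub hIc
  -- ∫ (x²-K²/3) = 0
  have hzero : (∫ x in (0:ℝ)..K, (x ^ 2 - K ^ 2 / 3)) = 0 := by
    rw [intervalIntegral.integral_sub (by apply Continuous.intervalIntegrable; continuity)
      intervalIntegrable_const, integral_pow, intervalIntegral.integral_const,
      smul_eq_mul]
    ring
  have hzero' : (∫ x in (0:ℝ)..K, (x ^ 2 - K ^ 2 / 3) * g c) = 0 := by
    have : (fun x => (x ^ 2 - K ^ 2 / 3) * g c)
        = fun x => g c * (x ^ 2 - K ^ 2 / 3) := by ext x; ring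
    rw [this, intervalIntegral.integral_const_mul, hzero, mul_zero]
  -- pointwise nonpositivity
  have hpt : ∀ u ∈ Set.Icc (0:ℝ) K, (u ^ 2 - K ^ 2 / 3) * (g u - g c) ≤ 0 := by
    intro u hu
    rcases le_total u c with h | h
    · have h1 : u ^ 2 - K ^ 2 / 3 ≤ 0 := by
        rw [← hc2]; nlinarith [hu.1, hc0.le]
      have h2 : 0 ≤ g u - g c := sub_nonneg.mpr (ha hu hcmem h)
      exact mul_nonpos_of_nonpos_of_nonneg h1 h2
    · have h1 : 0 ≤ u ^ 2 - K ^ 2 / 3 := by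
        rw [← hc2]; nlinarith [hc0.le]
      have h2 : g u - g c ≤ 0 := sub_nonpos.mpr (ha hcmem hu h)
      exact mul_nonpos_of_nonneg_of_nonpos h1 h2
  have hmain : (∫ x in (0:ℝ)..K, (x ^ 2 - K ^ 2 / 3) * (g x - g c)) ≤ 0 := by
    have hneg := intervalIntegral.integral_nonneg (μ := volume) (hab := hK.le)
      (f := fun u => -((u ^ 2 - K ^ 2 / 3) * (g u - g c)))
      (fun u hu => neg_nonneg.mpr (hpt u hu))
    rw [intervalIntegral.integral_neg] at hneg
    linarith
  have hsplit : (∫ x in (0:ℝ)..K, (x ^ 2 - K ^ 2 / 3) * g x)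
      = (∫ x in (0:ℝ)..K, (x ^ 2 - K ^ 2 / 3) * (g x - g c))
        + ∫ x in (0:ℝ)..K, (x ^ 2 - K ^ 2 / 3) * g c := by
    rw [← intervalIntegral.integral_add hIdiff hIc]
    congr 1; ext x; ring
  have hfin : (∫ x in (0:ℝ)..K, (x ^ 2 - K ^ 2 / 3) * g x) ≤ 0 := by
    rw [hsplit, hzero']; linarith
  have hsub : (∫ x in (0:ℝ)..K, (x ^ 2 - K ^ 2 / 3) * g x)
      = (∫ x in (0:ℝ)..K, x ^ 2 * g x) - K ^ 2 / 3 * ∫ x in (0:ℝ)..K, g x := by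
    rw [← intervalIntegral.integral_const_mul, ← intervalIntegral.integral_sub hIx2g (hIg.const_mul _)]
    congr 1; ext x; ring
  linarith [hsub ▸ hfin]

/-- If `Z` has a unimodal density `f` with mode at `0` (nondecreasing on `(−∞,0]`,
nonincreasing on `[0,∞)`), then for every `K > 0`,
`E[Z²·1_{|Z| ≤ K}] ≤ (K²/3)·P(|Z| ≤ K)`; equivalently the conditional second moment
`σ² = E[Z² | |Z| ≤ K]` is at most `K²/3` whenever `P(|Z| ≤ K) > 0`. -/
theorem unimodal_truncated_second_moment
    {Ω : Type*} [MeasurableSpace Ω] (ℙ : Measure Ω) [IsProbabilityMeasure ℙ]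
    (Z : Ω → ℝ) (hZ : Measurable Z)
    (f : ℝ → ℝ) (hf_meas : Measurable f) (hf_nonneg : ∀ x : ℝ, 0 ≤ f x)
    (hf_density :
      Measure.map Z ℙ = volume.withDensity (fun x => ENNReal.ofReal (f x)))
    (hf_mono : MonotoneOn f (Set.Iic (0 : ℝ)))
    (hf_anti : AntitoneOn f (Set.Ici (0 : ℝ)))
    (K : ℝ) (hK : 0 < K) :
    (∫ ω, (if |Z ω| ≤ K then (Z ω) ^ 2 else 0) ∂ℙ) ≤
      K ^ 2 / 3 * (ℙ {ω | |Z ω| ≤ K}).toReal ∧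
    (0 < (ℙ {ω | |Z ω| ≤ K}).toReal →
      (∫ ω, (if |Z ω| ≤ K then (Z ω) ^ 2 else 0) ∂ℙ) /
          (ℙ {ω | |Z ω| ≤ K}).toReal ≤ K ^ 2 / 3) := by
  have hμprob : IsProbabilityMeasure (Measure.map Z ℙ) :=
    Measure.isProbabilityMeasure_map hZ.aemeasurable
  have hpre : {ω | |Z ω| ≤ K} = Z ⁻¹' Set.Icc (-K) K := by
    ext ω; simp [abs_le, Set.mem_Icc]
  have hmeasP : ℙ {ω | |Z ω| ≤ K} = (Measure.map Z ℙ) (Set.Icc (-K) K) := by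
    rw [Measure.map_apply hZ measurableSet_Icc, hpre]
  -- `f` is integrable (its integral is 1)
  have h1 : (∫⁻ x, ENNReal.ofReal (f x)) = 1 := by
    have h2 : (Measure.map Z ℙ) Set.univ = 1 := measure_univ
    rwa [hf_density, withDensity_apply _ MeasurableSet.univ, Measure.restrict_univ] at h2
  have hfint : Integrable f := by
    refine ⟨hf_meas.aestronglyMeasurable, ?_⟩
    rw [hasFiniteIntegral_iff_ofReal (Filter.Eventually.of_forall hf_nonneg), h1]
    exact ENNReal.one_lt_top
  -- the probability as an integral of `f`
  have hB : (ℙ {ω | |Z ω| ≤ K}).toReal = ∫ x in Set.Icc (-K) K, f x := by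
    rw [hmeasP, hf_density, withDensity_apply _ measurableSet_Icc,
      ← integral_eq_lintegral_of_nonneg_ae (Filter.Eventually.of_forall hf_nonneg)
        hf_meas.aestronglyMeasurable.restrict]
  -- the truncated second moment as an integral of `x² f x`
  have hFmeas : Measurable (fun x : ℝ => if |x| ≤ K then x ^ 2 else 0) := by
    exact Measurable.ite (measurableSet_le measurable_id.abs measurable_const)
      (measurable_id.pow_const 2) measurable_const
  have hA : (∫ ω, (if |Z ω| ≤ K then (Z ω) ^ 2 else 0) ∂ℙ)
      = ∫ x in Set.Icc (-K) K, x ^ 2 * f x := by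
    have e1 : (∫ ω, (if |Z ω| ≤ K then (Z ω) ^ 2 else 0) ∂ℙ)
        = ∫ x, (if |x| ≤ K then x ^ 2 else 0) ∂(Measure.map Z ℙ) :=
      (integral_map hZ.aemeasurable hFmeas.aestronglyMeasurable).symm
    rw [e1, hf_density]
    have e2 : (fun x : ℝ => ENNReal.ofReal (f x))
        = fun x => ((Real.toNNReal (f x) : ℝ≥0) : ℝ≥0∞) := rfl
    rw [e2, integral_withDensity_eq_integral_smul hf_meas.real_toNNReal,
      ← integral_indicator measurableSet_Icc]
    congr 1; ext x
    rw [NNReal.smul_def, Real.coe_toNNReal _ (hf_nonneg x)]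
    by_cases hx : |x| ≤ K
    · rw [if_pos hx, Set.indicator_of_mem (Set.mem_Icc.mpr (abs_le.mp hx)),
        smul_eq_mul]
      ring
    · rw [if_neg hx,
        Set.indicator_of_notMem (fun h => hx (abs_le.mpr (Set.mem_Icc.mp h)))]
      exact smul_zero _
  -- integrability of `x² f x`
  have hx2f : IntegrableOn (fun x => x ^ 2 * f x) (Set.Ioc (-K) K) := by
    refine Integrable.mono' ((hfint.integrableOn).const_mul (K ^ 2))
      ((measurable_id.pow_const 2).mul hf_meas).aestronglyMeasurable ?_
    rw [ae_restrict_iff' measurableSet_Ioc]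
    filter_upwards with x hx
    have hx2 : x ^ 2 ≤ K ^ 2 := by nlinarith [hx.1, hx.2]
    calc ‖x ^ 2 * f x‖ = x ^ 2 * f x := by
          rw [Real.norm_eq_abs, abs_of_nonneg (mul_nonneg (sq_nonneg x) (hf_nonneg x))]
      _ ≤ K ^ 2 * f x := mul_le_mul_of_nonneg_right hx2 (hf_nonneg x)
  have hx2f1 : IntervalIntegrable (fun x => x ^ 2 * f x) volume (-K) 0 := by
    rw [intervalIntegrable_iff, Set.uIoc_of_le (by linarith)]
    exact hx2f.mono_set (Set.Ioc_subset_Ioc le_rfl (by linarith))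
  have hx2f2 : IntervalIntegrable (fun x => x ^ 2 * f x) volume 0 K := by
    rw [intervalIntegrable_iff, Set.uIoc_of_le hK.le]
    exact hx2f.mono_set (Set.Ioc_subset_Ioc (by linarith) le_rfl)
  -- right half
  have hR : ∫ x in (0:ℝ)..K, x ^ 2 * f x ≤ K ^ 2 / 3 * ∫ x in (0:ℝ)..K, f x :=
    aux_half K hK f hf_meas hf_nonneg
      (hf_anti.mono (Set.Icc_subset_Ici_self)) hfint.integrableOn
  -- left half, by reflection
  have hL : ∫ x in (-K:ℝ)..0, x ^ 2 * f x ≤ K ^ 2 / 3 * ∫ x in (-K:ℝ)..0, f x := by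
    have e1 : (∫ x in (-K:ℝ)..0, x ^ 2 * f x) = ∫ x in (0:ℝ)..K, x ^ 2 * f (-x) := by
      rw [show (∫ x in (0:ℝ)..K, x ^ 2 * f (-x))
          = ∫ x in (0:ℝ)..K, ((-x) ^ 2 * f (-x)) from by congr 1; ext x; ring,
        intervalIntegral.integral_comp_neg (fun x => x ^ 2 * f x)]
      norm_num
    have e2 : (∫ x in (-K:ℝ)..0, f x) = ∫ x in (0:ℝ)..K, f (-x) := by
      rw [intervalIntegral.integral_comp_neg f]; norm_num
    rw [e1, e2]
    refine aux_half K hK (fun x => f (-x)) (hf_meas.comp measurable_neg)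
      (fun x => hf_nonneg _) ?_ (hfint.comp_neg.integrableOn)
    intro x hx y hy hxy
    exact hf_mono (Set.mem_Iic.mpr (neg_nonpos.mpr hy.1))
      (Set.mem_Iic.mpr (neg_nonpos.mpr hx.1)) (by linarith)
  -- combine
  have hf1 : IntervalIntegrable f volume (-K) 0 := hfint.intervalIntegrable
  have hf2 : IntervalIntegrable f volume 0 K := hfint.intervalIntegrable
  have hsplit1 : (∫ x in Set.Icc (-K) K, x ^ 2 * f x)
      = (∫ x in (-K:ℝ)..0, x ^ 2 * f x) + ∫ x in (0:ℝ)..K, x ^ 2 * f x := by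
    rw [intervalIntegral.integral_add_adjacent_intervals hx2f1 hx2f2,
      intervalIntegral.integral_of_le (by linarith), integral_Icc_eq_integral_Ioc]
  have hsplit2 : (∫ x in Set.Icc (-K) K, f x)
      = (∫ x in (-K:ℝ)..0, f x) + ∫ x in (0:ℝ)..K, f x := by
    rw [intervalIntegral.integral_add_adjacent_intervals hf1 hf2,
      intervalIntegral.integral_of_le (by linarith), integral_Icc_eq_integral_Ioc]
  have hmain : (∫ ω, (if |Z ω| ≤ K then (Z ω) ^ 2 else 0) ∂ℙ) ≤
      K ^ 2 / 3 * (ℙ {ω | |Z ω| ≤ K}).toReal := by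
    rw [hA, hB, hsplit1, hsplit2, mul_add]
    exact add_le_add hL hR
  refine ⟨hmain, fun hpos => ?_⟩
  rw [div_le_iff₀ hpos]
  exact hmain
end

section
/- Assume condition (A1) holds for the biweight loss with parameter K, i.e. M attains its minimum at 0 and M(θ) ≥ M(0) + min{c₁θ², c₂} for constants c₁, c₂ > 0. Then there exists a constant D > 0 such that v(θ) := E[X(θ)²] ≤ D · M(θ) for all θ ∈ ℝ. -/
open MeasureTheory

/-- `M(θ) = E[min{(Z−θ)², K²}]`, the expectation of the biweight loss at shift `θ`. -/
noncomputable def biweightMean {Ω : Type*} [MeasurableSpace Ω] (ℙ : Measure Ω)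
    (Z : Ω → ℝ) (K θ : ℝ) : ℝ :=
  ∫ ω, min ((Z ω - θ) ^ 2) (K ^ 2) ∂ℙ

/-- `v(θ) = E[X(θ)²]` where `X(θ) = min{(Z−θ)², K²} − min{Z², K²}`. -/
noncomputable def biweightVar {Ω : Type*} [MeasurableSpace Ω] (ℙ : Measure Ω)
    (Z : Ω → ℝ) (K θ : ℝ) : ℝ :=
  ∫ ω, (min ((Z ω - θ) ^ 2) (K ^ 2) - min ((Z ω) ^ 2) (K ^ 2)) ^ 2 ∂ℙ

lemma aux_int {Ω : Type*} [MeasurableSpace Ω] (ℙ : Measure Ω) [IsProbabilityMeasure ℙ]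
    (Z : Ω → ℝ) (hZ : Measurable Z) (K θ : ℝ) :
    Integrable (fun ω => min ((Z ω - θ) ^ 2) (K ^ 2)) ℙ := by
  refine (integrable_const (K ^ 2)).mono' ?_ ?_
  · exact (((hZ.sub_const θ).pow_const 2).min measurable_const).aestronglyMeasurable
  · refine Filter.Eventually.of_forall fun ω => ?_
    rw [Real.norm_eq_abs, abs_of_nonneg (le_min (sq_nonneg _) (sq_nonneg _))]
    exact min_le_right _ _

/-- Under condition (A1) for the biweight loss there is a constant `D > 0` with
`v(θ) ≤ D·M(θ)` for all `θ`. -/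
theorem variance_bounded_by_mean
    {Ω : Type*} [MeasurableSpace Ω] (ℙ : Measure Ω) [IsProbabilityMeasure ℙ]
    (Z : Ω → ℝ) (hZ : Measurable Z) (K : ℝ) (hK : 0 < K)
    (c₁ c₂ : ℝ) (hc₁ : 0 < c₁) (hc₂ : 0 < c₂)
    (hA1min : ∀ θ : ℝ, biweightMean ℙ Z K 0 ≤ biweightMean ℙ Z K θ)
    (hA1 : ∀ θ : ℝ,
      biweightMean ℙ Z K 0 + min (c₁ * θ ^ 2) c₂ ≤ biweightMean ℙ Z K θ) :
    ∃ D : ℝ, 0 < D ∧ ∀ θ : ℝ, biweightVar ℙ Z K θ ≤ D * biweightMean ℙ Z K θ := by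
  refine ⟨2 * K ^ 2, by positivity, fun θ => ?_⟩
  have hfθ := aux_int ℙ Z hZ K θ
  have hf0' := aux_int ℙ Z hZ K 0
  have hf0 : Integrable (fun ω => min ((Z ω) ^ 2) (K ^ 2)) ℙ := by
    simpa using hf0'
  -- integrability of the squared difference
  have hsq : Integrable
      (fun ω => (min ((Z ω - θ) ^ 2) (K ^ 2) - min ((Z ω) ^ 2) (K ^ 2)) ^ 2) ℙ := by
    refine (integrable_const (K ^ 4)).mono' ?_ ?_
    · exact (((((hZ.sub_const θ).pow_const 2).min measurable_const).sub
        ((hZ.pow_const 2).min measurable_const)).pow_const 2).aestronglyMeasurable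
    · refine Filter.Eventually.of_forall fun ω => ?_
      rw [Real.norm_eq_abs, abs_of_nonneg (sq_nonneg _)]
      set f := min ((Z ω - θ) ^ 2) (K ^ 2)
      set g := min ((Z ω) ^ 2) (K ^ 2)
      have hf0 : 0 ≤ f := le_min (sq_nonneg _) (sq_nonneg _)
      have hg0 : 0 ≤ g := le_min (sq_nonneg _) (sq_nonneg _)
      have hfK : f ≤ K ^ 2 := min_le_right _ _
      have hgK : g ≤ K ^ 2 := min_le_right _ _
      nlinarith [sq_nonneg (f - g), sq_nonneg (f + g)]
  have key : biweightVar ℙ Z K θ ≤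
      K ^ 2 * (biweightMean ℙ Z K θ + biweightMean ℙ Z K 0) := by
    have : biweightVar ℙ Z K θ ≤
        ∫ ω, K ^ 2 * (min ((Z ω - θ) ^ 2) (K ^ 2) + min ((Z ω) ^ 2) (K ^ 2)) ∂ℙ := by
      refine integral_mono hsq ((hfθ.add hf0).const_mul _) fun ω => ?_
      set f := min ((Z ω - θ) ^ 2) (K ^ 2)
      set g := min ((Z ω) ^ 2) (K ^ 2)
      have hf0 : 0 ≤ f := le_min (sq_nonneg _) (sq_nonneg _)
      have hg0 : 0 ≤ g := le_min (sq_nonneg _) (sq_nonneg _)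
      have hfK : f ≤ K ^ 2 := min_le_right _ _
      have hgK : g ≤ K ^ 2 := min_le_right _ _
      nlinarith [mul_nonneg hf0 hg0]
    calc biweightVar ℙ Z K θ ≤ _ := this
      _ = K ^ 2 * (biweightMean ℙ Z K θ + biweightMean ℙ Z K 0) := by
          rw [integral_const_mul, integral_add hfθ hf0]
          simp [biweightMean]
  have h0 : biweightMean ℙ Z K 0 ≤ biweightMean ℙ Z K θ := hA1min θ
  calc biweightVar ℙ Z K θ ≤ K ^ 2 * (biweightMean ℙ Z K θ + biweightMean ℙ Z K 0) := key
    _ ≤ 2 * K ^ 2 * biweightMean ℙ Z K θ := by nlinarith [sq_nonneg K]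
end
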